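/- arXiv:2201.05153 — 2 statements merged into one kernel-verified Lean document; each statement's English description precedes it below -/
import Mathlib

section
/- Suppose (Z̃_e)_{e∈E} is a finite family of pairwise-commuting involutive operators (separators) and (X̄_e)_{e∈E} a family of involutive operators (potential flippers) such that X̄_e Z̃_{e'} = (-1)^{δ_{e,e'}} Z̃_{e'} X̄_e for all e, e'. Then there exists a family (X̃_e)_{e∈E} of operators, each of the form X̄_e times a product of some Z̃_{e''}'s, such that X̃_e X̃_{e'} = X̃_{e'} X̃_e for all e, e', and X̃_e Z̃_{e'} = (-1)^{δ_{e,e'}} Z̃_{e'} X̃_e. -/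
/-- Moving an element past a product of separators, picking up a minus sign
when it anticommutes with exactly one (distinct) factor. -/
lemma stmt11_aux_anticomm {E A : Type*} [Ring A] (Zt : E → A) (x : A) (f : E) :
    ∀ l : List E, l.Nodup → f ∈ l → (∀ g ∈ l, g ≠ f → x * Zt g = Zt g * x) →
    x * Zt f = -(Zt f * x) → x * (l.map Zt).prod = -((l.map Zt).prod * x) := by
  intro l
  induction l with
  | nil => intro _ h; simp at h
  | cons a t ih =>
    intro hnd hf hcom hanti
    rcases List.nodup_cons.mp hnd with ⟨ha, hndt⟩
    simp only [List.map_cons, List.prod_cons]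
    rcases List.mem_cons.mp hf with rfl | hft
    · -- a = f, so f ∉ t, x commutes with everything in t
      have hcomm : x * (t.map Zt).prod = (t.map Zt).prod * x := by
        refine (Commute.list_prod_right _ x ?_)
        intro y hy
        obtain ⟨g, hg, rfl⟩ := List.mem_map.mp hy
        exact hcom g (List.mem_cons_of_mem _ hg) (fun h => ha (h ▸ hg))
      calc x * (Zt f * (t.map Zt).prod) = (x * Zt f) * (t.map Zt).prod := by
            rw [mul_assoc]
        _ = -(Zt f * (x * (t.map Zt).prod)) := by
            rw [hanti]; noncomm_ring [mul_assoc]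
        _ = -(Zt f * ((t.map Zt).prod * x)) := by rw [hcomm]
        _ = -(Zt f * (t.map Zt).prod * x) := by rw [mul_assoc]
    · -- f ∈ t, a ≠ f
      have haf : a ≠ f := fun h => ha (h ▸ hft)
      have hxa : x * Zt a = Zt a * x := hcom a List.mem_cons_self haf
      have ht : x * (t.map Zt).prod = -((t.map Zt).prod * x) :=
        ih hndt hft (fun g hg => hcom g (List.mem_cons_of_mem _ hg)) hanti
      calc x * (Zt a * (t.map Zt).prod) = (x * Zt a) * (t.map Zt).prod := by
            rw [mul_assoc]
        _ = Zt a * (x * (t.map Zt).prod) := by rw [hxa, mul_assoc]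
        _ = Zt a * (-((t.map Zt).prod * x)) := by rw [ht]
        _ = -(Zt a * (t.map Zt).prod * x) := by noncomm_ring [mul_assoc]

/-- Given pairwise-commuting involutive separators `Z̃_e` and involutive potential
flippers `X̄_e` with `X̄_e Z̃_{e'} = (-1)^{δ_{ee'}} Z̃_{e'} X̄_e`, where the potential
flippers pairwise commute or anticommute, the flippers can be corrected by
multiplying with products of separators so that the full Pauli algebra holds. -/
theorem stmt11 {E A : Type*} [Fintype E] [DecidableEq E] [Ring A] [Algebra ℂ A]
    (Zt Xb : E → A)
    (hZsq : ∀ e, Zt e * Zt e = 1)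
    (hZcomm : ∀ e e', Zt e * Zt e' = Zt e' * Zt e)
    (hXsq : ∀ e, Xb e * Xb e = 1)
    (hXZ : ∀ e e', e ≠ e' → Xb e * Zt e' = Zt e' * Xb e)
    (hXZanti : ∀ e, Xb e * Zt e = -(Zt e * Xb e))
    (hXX : ∀ e e', Xb e * Xb e' = Xb e' * Xb e ∨
      Xb e * Xb e' = -(Xb e' * Xb e)) :
    ∃ Xt : E → A,
      (∀ e, ∃ l : List E, Xt e = Xb e * (l.map Zt).prod) ∧
      (∀ e e', Xt e * Xt e' = Xt e' * Xt e) ∧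
      (∀ e e', e ≠ e' → Xt e * Zt e' = Zt e' * Xt e) ∧
      (∀ e, Xt e * Zt e = -(Zt e * Xt e)) := by
  classical
  set κ : E → ℕ := fun e => ((Fintype.equivFin E) e : ℕ) with hκdef
  have hκinj : Function.Injective κ := fun a b h =>
    (Fintype.equivFin E).injective (Fin.ext h)
  let anti : E → E → Prop := fun e f => Xb e * Xb f = -(Xb f * Xb e)
  let S : E → Finset E := fun e => Finset.univ.filter (fun f => κ f < κ e ∧ anti e f)
  let L : E → List E := fun e => (S e).toList
  let P : E → A := fun e => ((L e).map Zt).prod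
  have hmemL : ∀ e f, f ∈ L e ↔ (κ f < κ e ∧ anti e f) := by
    intro e f
    simp [L, S, Finset.mem_toList]
  -- Zt g commutes with each P e
  have hZP : ∀ g e, Zt g * P e = P e * Zt g := by
    intro g e
    refine Commute.list_prod_right _ _ ?_
    intro y hy
    obtain ⟨g', _, rfl⟩ := List.mem_map.mp hy
    exact hZcomm g g'
  -- P e commutes with P f
  have hPP : ∀ e f, P e * P f = P f * P e := by
    intro e f
    refine (Commute.list_prod_right _ _ ?_).symm
    intro y hy
    obtain ⟨g', _, rfl⟩ := List.mem_map.mp hy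
    exact (hZP g' f).symm
  -- if f ∉ L e then Xb f commutes with P e
  have hXbP_comm : ∀ e f, f ∉ L e → Xb f * P e = P e * Xb f := by
    intro e f hf
    refine Commute.list_prod_right _ _ ?_
    intro y hy
    obtain ⟨g', hg', rfl⟩ := List.mem_map.mp hy
    exact hXZ f g' (fun h => hf (h ▸ hg'))
  -- if f ∈ L e then Xb f anticommutes with P e
  have hXbP_anti : ∀ e f, f ∈ L e → Xb f * P e = -(P e * Xb f) := by
    intro e f hf
    refine stmt11_aux_anticomm Zt (Xb f) f (L e) (Finset.nodup_toList _) hf ?_ (hXZanti f)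
    intro g _ hg
    exact hXZ f g (Ne.symm hg)
  refine ⟨fun e => Xb e * P e, fun e => ⟨L e, rfl⟩, ?_, ?_, ?_⟩
  · -- commutation of the corrected flippers
    have key : ∀ e f, κ e < κ f → Xb e * P e * (Xb f * P f) = Xb f * P f * (Xb e * P e) := by
      intro e f hlt
      have hfPe : Xb f * P e = P e * Xb f := by
        refine hXbP_comm e f ?_
        intro hmem
        exact absurd ((hmemL e f).mp hmem).1 (by omega)
      by_cases hA : anti f e
      · have heLf : e ∈ L f := (hmemL f e).mpr ⟨hlt, hA⟩
        have hePf : Xb e * P f = -(P f * Xb e) := hXbP_anti f e heLf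
        have hPfXe : P f * Xb e = -(Xb e * P f) := by
          rw [hePf, neg_neg]
        calc Xb e * P e * (Xb f * P f)
            = Xb e * (P e * Xb f) * P f := by noncomm_ring [mul_assoc]
          _ = Xb e * (Xb f * P e) * P f := by rw [hfPe]
          _ = (Xb e * Xb f) * (P e * P f) := by noncomm_ring [mul_assoc]
          _ = (-(Xb f * Xb e)) * (P e * P f) := by
              have : Xb f * Xb e = -(Xb e * Xb f) := hA
              rw [this]; noncomm_ring [mul_assoc]
          _ = Xb f * (-(Xb e * P f)) * P e := by rw [hPP e f]; noncomm_ring [mul_assoc]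
          _ = Xb f * (P f * Xb e) * P e := by rw [hPfXe]
          _ = Xb f * P f * (Xb e * P e) := by noncomm_ring [mul_assoc]
      · have heLf : e ∉ L f := fun hmem => hA ((hmemL f e).mp hmem).2
        have hePf : Xb e * P f = P f * Xb e := hXbP_comm f e heLf
        have hcommXX : Xb f * Xb e = Xb e * Xb f := (hXX f e).resolve_right hA
        calc Xb e * P e * (Xb f * P f)
            = Xb e * (P e * Xb f) * P f := by noncomm_ring [mul_assoc]
          _ = Xb e * (Xb f * P e) * P f := by rw [hfPe]
          _ = (Xb e * Xb f) * (P e * P f) := by noncomm_ring [mul_assoc]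
          _ = (Xb f * Xb e) * (P f * P e) := by rw [hcommXX, hPP e f]
          _ = Xb f * (P f * Xb e) * P e := by rw [← hePf]; noncomm_ring [mul_assoc]
          _ = Xb f * P f * (Xb e * P e) := by noncomm_ring [mul_assoc]
    intro e f
    rcases lt_trichotomy (κ e) (κ f) with h | h | h
    · exact key e f h
    · rw [hκinj h]
    · exact (key f e h).symm
  · intro e e' hne
    calc Xb e * P e * Zt e' = Xb e * (Zt e' * P e) := by rw [mul_assoc, ← hZP e' e]
      _ = (Xb e * Zt e') * P e := by rw [mul_assoc]
      _ = (Zt e' * Xb e) * P e := by rw [hXZ e e' hne]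
      _ = Zt e' * (Xb e * P e) := by rw [mul_assoc]
  · intro e
    calc Xb e * P e * Zt e = Xb e * (Zt e * P e) := by rw [mul_assoc, ← hZP e e]
      _ = (Xb e * Zt e) * P e := by rw [mul_assoc]
      _ = -(Zt e * Xb e) * P e := by rw [hXZanti e]
      _ = -(Zt e * (Xb e * P e)) := by noncomm_ring [mul_assoc]
end

section
/- For the Bravyi–Kitaev superfast encoding operators B̃_v = ∏_{e∋v} Z_{(v,e)} (product of Z over edges incident to v) and Ã_e (an X on edge e dressed with Z's on edges adjacent at its two endpoints with smaller label), the commutation relations match those of the fermionic operators: Ã_e and Ã_{e'} anticommute iff e ≠ e' share exactly one endpoint, and Ã_e anticommutes with B̃_v iff v is an endpoint of e; all B̃_v pairwise commute. -/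
open Matrix

noncomputable section

def PX : Matrix (Fin 2) (Fin 2) ℂ := !![0, 1; 1, 0]
def PZ : Matrix (Fin 2) (Fin 2) ℂ := !![1, 0; 0, -1]

/-- The tensor product over all edges (qubits) of single-qubit operators. -/
def pauliString (E : Type*) [Fintype E] (P : E → Matrix (Fin 2) (Fin 2) ℂ) :
    Matrix (E → Fin 2) (E → Fin 2) ℂ :=
  Matrix.of fun s t => ∏ e, P e (s e) (t e)

/- ### Auxiliary material -/

lemma PX_ne_one : PX ≠ 1 := by
  intro h
  have := congrFun (congrFun (congrArg (fun M => (M : Matrix (Fin 2) (Fin 2) ℂ)) h) 0) 0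
  simp [PX, Matrix.one_apply] at this

lemma PZ_ne_one : PZ ≠ 1 := by
  intro h
  have := congrFun (congrFun (congrArg (fun M => (M : Matrix (Fin 2) (Fin 2) ℂ)) h) 1) 1
  simp [PZ, Matrix.one_apply] at this
  norm_num at this

lemma PX_ne_PZ : PX ≠ PZ := by
  intro h
  have := congrFun (congrFun (congrArg (fun M => (M : Matrix (Fin 2) (Fin 2) ℂ)) h) 0) 0
  simp [PX, PZ] at this

open Classical in
/-- The sign picked up when swapping two single-qubit Paulis. -/
def sgn (A B : Matrix (Fin 2) (Fin 2) ℂ) : ℂ :=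
  if (A = PX ∧ B = PZ) ∨ (A = PZ ∧ B = PX) then -1 else 1

lemma sgn_one_left' (B : Matrix (Fin 2) (Fin 2) ℂ) : sgn 1 B = 1 := by
  simp [sgn, PX_ne_one.symm, PZ_ne_one.symm]

lemma sgn_one_right' (A : Matrix (Fin 2) (Fin 2) ℂ) : sgn A 1 = 1 := by
  simp [sgn, PX_ne_one.symm, PZ_ne_one.symm]

lemma PZ_mul_PX : PZ * PX = (-1 : ℂ) • (PX * PZ) := by
  ext i j
  fin_cases i <;> fin_cases j <;>
    norm_num [PX, PZ, Matrix.mul_apply, Fin.sum_univ_two]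

lemma sgn_spec {A B : Matrix (Fin 2) (Fin 2) ℂ}
    (hA : A = 1 ∨ A = PX ∨ A = PZ) (hB : B = 1 ∨ B = PX ∨ B = PZ) :
    B * A = sgn A B • (A * B) := by
  rcases hA with rfl | rfl | rfl <;> rcases hB with rfl | rfl | rfl
  · rw [sgn_one_left']; simp
  · rw [sgn_one_left']; simp
  · rw [sgn_one_left']; simp
  · rw [sgn_one_right']; simp
  · simp [sgn, PX_ne_PZ, PX_ne_PZ.symm]
  · show PZ * PX = sgn PX PZ • (PX * PZ)
    rw [PZ_mul_PX]
    congr 1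
    simp [sgn]
  · rw [sgn_one_right']; simp
  · show PX * PZ = sgn PZ PX • (PZ * PX)
    rw [PZ_mul_PX]
    simp [sgn, smul_smul]
  · simp [sgn, PX_ne_PZ, PX_ne_PZ.symm]

lemma sgn_one_left (B : Matrix (Fin 2) (Fin 2) ℂ) : sgn 1 B = 1 := by
  simp [sgn, PX_ne_one.symm, PZ_ne_one.symm]

lemma sgn_one_right (A : Matrix (Fin 2) (Fin 2) ℂ) : sgn A 1 = 1 := by
  simp [sgn, PX_ne_one.symm, PZ_ne_one.symm]

lemma sgn_PZ_PZ : sgn PZ PZ = 1 := by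
  simp [sgn, PX_ne_PZ, PX_ne_PZ.symm]

lemma sgn_self {A : Matrix (Fin 2) (Fin 2) ℂ} : sgn A A = 1 := by
  simp only [sgn, ite_eq_right_iff]
  rintro (⟨rfl, h⟩ | ⟨h, rfl⟩)
  · exact absurd h PX_ne_PZ
  · exact absurd h PX_ne_PZ

lemma sgn_PX_PZ : sgn PX PZ = -1 := by simp [sgn]
lemma sgn_PZ_PX : sgn PZ PX = -1 := by simp [sgn]

lemma pauliString_mul {E : Type*} [Fintype E] [DecidableEq E]
    (P Q : E → Matrix (Fin 2) (Fin 2) ℂ) :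
    pauliString E P * pauliString E Q = pauliString E fun e => P e * Q e := by
  ext s t
  simp only [pauliString, Matrix.mul_apply, Matrix.of_apply]
  calc ∑ u : E → Fin 2, (∏ e, P e (s e) (u e)) * ∏ e, Q e (u e) (t e)
      = ∑ u : E → Fin 2, ∏ e, P e (s e) (u e) * Q e (u e) (t e) := by
        simp_rw [Finset.prod_mul_distrib]
    _ = ∏ e, ∑ k : Fin 2, P e (s e) k * Q e k (t e) := by
        rw [Finset.prod_univ_sum, Fintype.piFinset_univ]

lemma pauliString_smul {E : Type*} [Fintype E]
    (c : E → ℂ) (P : E → Matrix (Fin 2) (Fin 2) ℂ) :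
    pauliString E (fun e => c e • P e) = (∏ e, c e) • pauliString E P := by
  ext s t
  simp only [pauliString, Matrix.of_apply, Matrix.smul_apply, smul_eq_mul,
    Finset.prod_mul_distrib]

lemma pauliString_ne_zero {E : Type*} [Fintype E]
    (P : E → Matrix (Fin 2) (Fin 2) ℂ) (h : ∀ e, ∃ i j, P e i j ≠ 0) :
    pauliString E P ≠ 0 := by
  choose i j hij using h
  intro h0
  have := congrFun (congrFun (congrArg (fun M => (M : Matrix (E → Fin 2) (E → Fin 2) ℂ)) h0) i) j
  simp only [pauliString, Matrix.of_apply, Matrix.zero_apply] at this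
  exact Finset.prod_ne_zero_iff.2 (fun e _ => hij e) this

lemma pauli_mul_entry_ne {A B : Matrix (Fin 2) (Fin 2) ℂ}
    (hA : A = 1 ∨ A = PX ∨ A = PZ) (hB : B = 1 ∨ B = PX ∨ B = PZ) :
    ∃ i j, (A * B) i j ≠ 0 := by
  by_contra h
  push_neg at h
  have h0 : A * B = 0 := by ext i j; exact h i j
  have hd : (A * B).det = 0 := by rw [h0]; simp
  rw [Matrix.det_mul] at hd
  rcases hA with rfl | rfl | rfl <;> rcases hB with rfl | rfl | rfl <;>
    simp [PX, PZ, Matrix.det_fin_two_of] at hd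

lemma swap_eq {E : Type*} [Fintype E] [DecidableEq E]
    {P Q : E → Matrix (Fin 2) (Fin 2) ℂ}
    (hP : ∀ e, P e = 1 ∨ P e = PX ∨ P e = PZ)
    (hQ : ∀ e, Q e = 1 ∨ Q e = PX ∨ Q e = PZ) :
    pauliString E Q * pauliString E P
      = (∏ e, sgn (P e) (Q e)) • (pauliString E P * pauliString E Q) := by
  rw [pauliString_mul, pauliString_mul, ← pauliString_smul]
  exact congrArg (pauliString E) (funext fun e => sgn_spec (hP e) (hQ e))

lemma panticomm_of {E : Type*} [Fintype E] [DecidableEq E]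
    {P Q : E → Matrix (Fin 2) (Fin 2) ℂ}
    (hP : ∀ e, P e = 1 ∨ P e = PX ∨ P e = PZ)
    (hQ : ∀ e, Q e = 1 ∨ Q e = PX ∨ Q e = PZ)
    (hS : (∏ e, sgn (P e) (Q e)) = -1) :
    pauliString E P * pauliString E Q = -(pauliString E Q * pauliString E P) := by
  rw [swap_eq hP hQ, hS]
  simp

lemma pcomm_of {E : Type*} [Fintype E] [DecidableEq E]
    {P Q : E → Matrix (Fin 2) (Fin 2) ℂ}
    (hP : ∀ e, P e = 1 ∨ P e = PX ∨ P e = PZ)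
    (hQ : ∀ e, Q e = 1 ∨ Q e = PX ∨ Q e = PZ)
    (hS : (∏ e, sgn (P e) (Q e)) = 1) :
    pauliString E P * pauliString E Q = pauliString E Q * pauliString E P := by
  rw [swap_eq hP hQ, hS, one_smul]

lemma not_panticomm_of {E : Type*} [Fintype E] [DecidableEq E]
    {P Q : E → Matrix (Fin 2) (Fin 2) ℂ}
    (hP : ∀ e, P e = 1 ∨ P e = PX ∨ P e = PZ)
    (hQ : ∀ e, Q e = 1 ∨ Q e = PX ∨ Q e = PZ)
    (hS : (∏ e, sgn (P e) (Q e)) = 1) :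
    ¬ (pauliString E P * pauliString E Q = -(pauliString E Q * pauliString E P)) := by
  intro h
  rw [pcomm_of hP hQ hS] at h
  have h2 : (2 : ℂ) • (pauliString E Q * pauliString E P) = 0 := by
    rw [two_smul]
    rw [eq_neg_iff_add_eq_zero] at h
    exact h
  have hz : pauliString E Q * pauliString E P = 0 := by
    rcases smul_eq_zero.mp h2 with h' | h'
    · norm_num at h'
    · exact h'
  rw [pauliString_mul] at hz
  exact pauliString_ne_zero _ (fun e => pauli_mul_entry_ne (hQ e) (hP e)) hz

variable {V E : Type*} [Fintype V] [DecidableEq V] [Fintype E] [DecidableEq E]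
  [LinearOrder E]

/-- Whether edge `e` is incident to vertex `v`, given endpoint maps `L`, `R`. -/
def incident (L R : E → V) (e : E) (v : V) : Prop := L e = v ∨ R e = v

instance (L R : E → V) (e : E) (v : V) : Decidable (incident L R e v) := by
  unfold incident; infer_instance

/-- The BKSF vertex operator `B̃_v`: product of `Z` over edges incident to `v`. -/
def Bop (L R : E → V) (v : V) : Matrix (E → Fin 2) (E → Fin 2) ℂ :=
  pauliString E fun e => if incident L R e v then PZ else 1

/-- The BKSF edge operator `Ã_e`: `X` on `e` dressed by `Z` on the
smaller-labelled edges incident to either endpoint of `e`. -/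
def Aop (L R : E → V) (e : E) : Matrix (E → Fin 2) (E → Fin 2) ℂ :=
  pauliString E fun e' =>
    if e' = e then PX
    else if (incident L R e' (L e) ∨ incident L R e' (R e)) ∧ e' < e then PZ
    else 1

/-- Local factor of `Aop`. -/
def Afac (L R : E → V) (e : E) : E → Matrix (Fin 2) (Fin 2) ℂ := fun e' =>
  if e' = e then PX
  else if (incident L R e' (L e) ∨ incident L R e' (R e)) ∧ e' < e then PZ
  else 1

/-- Local factor of `Bop`. -/
def Bfac (L R : E → V) (v : V) : E → Matrix (Fin 2) (Fin 2) ℂ := fun e =>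
  if incident L R e v then PZ else 1

lemma Aop_eq (L R : E → V) (e : E) : Aop L R e = pauliString E (Afac L R e) := rfl
lemma Bop_eq (L R : E → V) (v : V) : Bop L R v = pauliString E (Bfac L R v) := rfl

lemma Afac_mem (L R : E → V) (e : E) (x : E) :
    Afac L R e x = 1 ∨ Afac L R e x = PX ∨ Afac L R e x = PZ := by
  unfold Afac; split_ifs <;> tauto

lemma Bfac_mem (L R : E → V) (v : V) (x : E) :
    Bfac L R v x = 1 ∨ Bfac L R v x = PX ∨ Bfac L R v x = PZ := by
  unfold Bfac; split_ifs <;> tauto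

/-- Whether two edges share an endpoint. -/
def shares (L R : E → V) (e e' : E) : Prop :=
  incident L R e (L e') ∨ incident L R e (R e')

instance (L R : E → V) (e e' : E) : Decidable (shares L R e e') := by
  unfold shares; infer_instance

lemma shares_comm (L R : E → V) (e e' : E) : shares L R e e' ↔ shares L R e' e := by
  unfold shares incident
  constructor <;>
    · rintro ((h | h) | (h | h))
      · exact Or.inl (Or.inl h.symm)
      · exact Or.inr (Or.inl h.symm)
      · exact Or.inl (Or.inr h.symm)
      · exact Or.inr (Or.inr h.symm)

lemma shares_iff_card (L R : E → V) (hLR : ∀ e, L e ≠ R e)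
    (hsimple : ∀ e e', e ≠ e' → ({L e, R e} : Finset V) ≠ {L e', R e'})
    {e e' : E} (hne : e ≠ e') :
    shares L R e e' ↔ (({L e, R e} : Finset V) ∩ {L e', R e'}).card = 1 := by
  have hcard : (({L e, R e} : Finset V)).card = 2 := Finset.card_pair (hLR e)
  have hcard' : (({L e', R e'} : Finset V)).card = 2 := Finset.card_pair (hLR e')
  have hsub : ({L e, R e} : Finset V) ∩ {L e', R e'} ⊆ {L e, R e} :=
    Finset.inter_subset_left
  have hle : (({L e, R e} : Finset V) ∩ {L e', R e'}).card ≤ 2 :=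
    hcard ▸ Finset.card_le_card hsub
  have hne2 : (({L e, R e} : Finset V) ∩ {L e', R e'}).card ≠ 2 := by
    intro h2
    have heq : ({L e, R e} : Finset V) ∩ {L e', R e'} = {L e, R e} :=
      Finset.eq_of_subset_of_card_le hsub (by omega)
    have hss : ({L e, R e} : Finset V) ⊆ {L e', R e'} := by
      intro x hx
      have : x ∈ ({L e, R e} : Finset V) ∩ {L e', R e'} := by rw [heq]; exact hx
      exact (Finset.mem_inter.mp this).2
    exact hsimple e e' hne (Finset.eq_of_subset_of_card_le hss (by omega))
  have hnonempty : shares L R e e' ↔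
      (({L e, R e} : Finset V) ∩ {L e', R e'}).Nonempty := by
    unfold shares incident
    constructor
    · rintro ((h | h) | (h | h))
      · exact ⟨L e', by simp [← h]⟩
      · exact ⟨L e', by simp [← h]⟩
      · exact ⟨R e', by simp [← h]⟩
      · exact ⟨R e', by simp [← h]⟩
    · rintro ⟨x, hx⟩
      simp only [Finset.mem_inter, Finset.mem_insert, Finset.mem_singleton] at hx
      obtain ⟨h1 | h1, h2 | h2⟩ := hx <;> subst h1 <;> tauto
  rw [hnonempty, ← Finset.card_pos]
  omega

/-- Sign for a pair of `Aop`s with `e < e'`. -/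
lemma A_sgn (L R : E → V) {e e' : E} (h : e < e') :
    (∏ x, sgn (Afac L R e x) (Afac L R e' x))
      = if shares L R e e' then -1 else 1 := by
  have hne : e ≠ e' := ne_of_lt h
  have houtside : ∀ x ∈ (Finset.univ : Finset E), x ∉ ({e, e'} : Finset E) →
      sgn (Afac L R e x) (Afac L R e' x) = 1 := by
    intro x _ hx
    simp only [Finset.mem_insert, Finset.mem_singleton, not_or] at hx
    unfold Afac
    rw [if_neg hx.1, if_neg hx.2]
    split_ifs <;>
      simp [sgn_one_left, sgn_one_right, sgn_PZ_PZ]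
  rw [← Finset.prod_subset (Finset.subset_univ {e, e'}) houtside,
    Finset.prod_pair hne]
  have h1 : Afac L R e e = PX := by unfold Afac; simp
  have h2 : Afac L R e' e' = PX := by unfold Afac; simp
  have h3 : Afac L R e e' = 1 := by
    unfold Afac
    rw [if_neg hne.symm, if_neg]
    rintro ⟨-, hlt⟩
    exact absurd h (asymm hlt)
  have h4 : Afac L R e' e = if shares L R e e' then PZ else 1 := by
    unfold Afac shares
    rw [if_neg hne]
    split_ifs with h5 h6 h6
    · exact (if_pos h6).symm
    · exact absurd h5.1 h6
    · exact absurd ⟨h6, h⟩ h5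
    · exact (if_neg h6).symm
  rw [h1, h2, h3, h4, sgn_one_left]
  split_ifs with hs
  · rw [sgn_PX_PZ]; ring
  · rw [sgn_one_right]; ring

/-- Sign for `Aop` against `Bop`. -/
lemma AB_sgn (L R : E → V) (e : E) (v : V) :
    (∏ x, sgn (Afac L R e x) (Bfac L R v x))
      = if incident L R e v then -1 else 1 := by
  rw [Finset.prod_eq_single e]
  · have h1 : Afac L R e e = PX := by unfold Afac; simp
    rw [h1]
    unfold Bfac
    split_ifs
    · exact sgn_PX_PZ
    · exact sgn_one_right _
  · intro x _ hx
    unfold Afac Bfac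
    rw [if_neg hx]
    split_ifs <;> simp [sgn_one_left, sgn_one_right, sgn_PZ_PZ]
  · intro h; exact absurd (Finset.mem_univ e) h

lemma A_comm_dichotomy (L R : E → V) (e e' : E) (hne : e ≠ e') :
    Aop L R e * Aop L R e' = -(Aop L R e' * Aop L R e) ↔ shares L R e e' := by
  rcases lt_or_gt_of_ne hne with h | h
  · rw [Aop_eq, Aop_eq]
    constructor
    · intro hac
      by_contra hs
      exact not_panticomm_of (Afac_mem L R e) (Afac_mem L R e')
        (by rw [A_sgn L R h, if_neg hs]) hac
    · intro hs
      exact panticomm_of (Afac_mem L R e) (Afac_mem L R e')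
        (by rw [A_sgn L R h, if_pos hs])
  · rw [Aop_eq, Aop_eq, shares_comm]
    constructor
    · intro hac
      by_contra hs
      exact not_panticomm_of (Afac_mem L R e') (Afac_mem L R e)
        (by rw [A_sgn L R h, if_neg hs]) (neg_eq_iff_eq_neg.mp hac.symm)
    · intro hs
      have hh := panticomm_of (Afac_mem L R e') (Afac_mem L R e)
        (by rw [A_sgn L R h, if_pos hs])
      exact neg_eq_iff_eq_neg.mp hh.symm

/-- BKSF commutation relations: the `Ã_e` anticommute iff the edges share exactly
one endpoint, `Ã_e` anticommutes with `B̃_v` iff `v` is an endpoint of `e`, and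
the `B̃_v` pairwise commute. -/
theorem stmt12 (L R : E → V) (hLR : ∀ e, L e ≠ R e)
    (hsimple : ∀ e e', e ≠ e' → ({L e, R e} : Finset V) ≠ {L e', R e'}) :
    (∀ e e', Aop L R e * Aop L R e' = -(Aop L R e' * Aop L R e) ↔
      e ≠ e' ∧ (({L e, R e} : Finset V) ∩ {L e', R e'}).card = 1) ∧
    (∀ e e', ¬(e ≠ e' ∧ (({L e, R e} : Finset V) ∩ {L e', R e'}).card = 1) →
      Aop L R e * Aop L R e' = Aop L R e' * Aop L R e) ∧
    (∀ e v, Aop L R e * Bop L R v = -(Bop L R v * Aop L R e) ↔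
      L e = v ∨ R e = v) ∧
    (∀ v v', Bop L R v * Bop L R v' = Bop L R v' * Bop L R v) := by
  have key : ∀ e e', e ≠ e' →
      (Aop L R e * Aop L R e' = -(Aop L R e' * Aop L R e) ↔
        (({L e, R e} : Finset V) ∩ {L e', R e'}).card = 1) := by
    intro e e' hne
    rw [A_comm_dichotomy L R e e' hne, shares_iff_card L R hLR hsimple hne]
  refine ⟨?_, ?_, ?_, ?_⟩
  · intro e e'
    by_cases hne : e = e'
    · subst hne
      simp only [ne_eq, not_true_eq_false, false_and, iff_false]
      rw [Aop_eq]
      exact not_panticomm_of (Afac_mem L R e) (Afac_mem L R e)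
        (Finset.prod_eq_one fun x _ => sgn_self)
    · rw [key e e' hne]
      simp [hne]
  · intro e e' h
    by_cases hne : e = e'
    · subst hne; rfl
    · push_neg at h
      have hcard := h hne
      have hns : ¬ shares L R e e' := by
        rw [shares_iff_card L R hLR hsimple hne]; exact hcard
      rcases lt_or_gt_of_ne hne with hlt | hlt
      · rw [Aop_eq, Aop_eq]
        exact pcomm_of (Afac_mem L R e) (Afac_mem L R e')
          (by rw [A_sgn L R hlt, if_neg hns])
      · rw [Aop_eq, Aop_eq]
        have hns' : ¬ shares L R e' e := fun hs => hns ((shares_comm L R e e').mpr hs)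
        exact (pcomm_of (Afac_mem L R e') (Afac_mem L R e)
          (by rw [A_sgn L R hlt, if_neg hns'])).symm
  · intro e v
    rw [Aop_eq, Bop_eq]
    constructor
    · intro hac
      by_contra hv
      exact not_panticomm_of (Afac_mem L R e) (Bfac_mem L R v)
        (by rw [AB_sgn L R e v, if_neg (show ¬ incident L R e v from hv)]) hac
    · intro hv
      exact panticomm_of (Afac_mem L R e) (Bfac_mem L R v)
        (by rw [AB_sgn L R e v, if_pos (show incident L R e v from hv)])
  · intro v v'
    rw [Bop_eq, Bop_eq]
    refine pcomm_of (Bfac_mem L R v) (Bfac_mem L R v')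
      (Finset.prod_eq_one fun x _ => ?_)
    unfold Bfac
    split_ifs <;> simp [sgn_one_left, sgn_one_right, sgn_PZ_PZ]

end
end
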